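/- arXiv:2211.12647 — 5 statements merged into one kernel-verified Lean document; each statement's English description precedes it below -/
import Mathlib

section
/- For every real number x > 0 and every y in [0,1], the generalized harmonic number satisfies H_{x+y} - H_x ≤ y/(x+y), where H_x = Σ_{k=1}^∞ x/(k(x+k)). -/
/-- Generalized harmonic number `H x = ∑_{k=1}^∞ x / (k (x+k))`. -/
noncomputable def genHarmonic (x : ℝ) : ℝ := ∑' k : ℕ, x / ((k + 1) * (x + (k + 1)))

lemma genHarmonic_summable (c : ℝ) (hc : 0 < c) :
    Summable (fun k : ℕ => c / ((k + 1) * (c + (k + 1)))) := by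
  have h1 : Summable (fun n : ℕ => (1 : ℝ) / (n : ℝ) ^ 2) :=
    Real.summable_one_div_nat_pow.mpr (by norm_num)
  have h2 : Summable (fun k : ℕ => c * ((1 : ℝ) / ((k : ℝ) + 1) ^ 2)) := by
    have := (summable_nat_add_iff 1).mpr h1
    push_cast at this
    exact this.mul_left c
  apply Summable.of_nonneg_of_le (fun k => by positivity) _ h2
  intro k
  have hk1 : (0 : ℝ) < (k : ℝ) + 1 := by positivity
  rw [mul_one_div]
  apply div_le_div_of_nonneg_left hc.le (by positivity)
  have : ((k : ℝ) + 1) ^ 2 = ((k : ℝ) + 1) * ((k : ℝ) + 1) := sq _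
  rw [this]
  nlinarith

theorem harmonic_growth (x y : ℝ) (hx : 0 < x) (hy0 : 0 ≤ y) (hy1 : y ≤ 1) :
    genHarmonic (x + y) - genHarmonic x ≤ y / (x + y) := by
  have hxy : 0 < x + y := by linarith
  have hA := genHarmonic_summable (x + y) hxy
  have hB := genHarmonic_summable x hx
  unfold genHarmonic
  rw [← (hA.hasSum.sub hB.hasSum).tsum_eq]
  apply Summable.tsum_le_of_sum_range_le (hA.hasSum.sub hB.hasSum).summable
  intro n
  have key : ∀ k ∈ Finset.range n,
      (x + y) / ((k + 1) * (x + y + (k + 1))) - x / ((k + 1) * (x + (k + 1)))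
      ≤ y / (x + y + (k : ℝ)) - y / (x + y + ((k : ℝ) + 1)) := by
    intro k _
    have hk1 : (0 : ℝ) < (k : ℝ) + 1 := by positivity
    have hd1 : (0 : ℝ) < x + (k : ℝ) + 1 := by linarith
    have hd2 : (0 : ℝ) < x + y + (k : ℝ) + 1 := by linarith
    have hd3 : (0 : ℝ) < x + y + (k : ℝ) := by linarith
    have e1 : (x + y) / (((k : ℝ) + 1) * (x + y + ((k : ℝ) + 1))) - x / (((k : ℝ) + 1) * (x + ((k : ℝ) + 1)))
        = y / ((x + (k : ℝ) + 1) * (x + y + (k : ℝ) + 1)) := by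
      field_simp
      ring
    have e2 : y / (x + y + (k : ℝ)) - y / (x + y + ((k : ℝ) + 1))
        = y / ((x + y + (k : ℝ)) * (x + y + (k : ℝ) + 1)) := by
      field_simp
      ring
    rw [e1, e2]
    apply div_le_div_of_nonneg_left hy0 (by positivity)
    nlinarith
  calc ∑ k ∈ Finset.range n,
        ((x + y) / ((k + 1) * (x + y + (k + 1))) - x / ((k + 1) * (x + (k + 1))))
      ≤ ∑ k ∈ Finset.range n, (y / (x + y + (k : ℝ)) - y / (x + y + ((k : ℝ) + 1))) :=
        Finset.sum_le_sum key
    _ = y / (x + y + (0 : ℕ)) - y / (x + y + (n : ℕ)) := by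
        have := Finset.sum_range_sub' (fun i : ℕ => y / (x + y + (i : ℝ))) n
        simpa using this
    _ ≤ y / (x + y) := by
        have h1 : 0 ≤ y / (x + y + (n : ℕ)) := by positivity
        have h2 : y / (x + y + (0 : ℕ)) = y / (x + y) := by norm_num
        linarith
end

section
/- Let r > 0 and t ≥ 1 be real numbers. Consider a nonincreasing nonnegative finite sequence whose first element is t−1, followed by an arithmetic subsequence a_1, …, a_{⌈tr⌉−⌈r⌉} with common difference −1/r, followed by ⌈r⌉−1 further terms b_1, …, b_{⌈r⌉−1}. If t−1−a_1 ≤ 1/r, then the arithmetic mean of the entire sequence (of length ⌈tr⌉) is at least (t−2+1/t)/2. -/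
theorem average_claim (r t : ℝ) (hr : 0 < r) (ht : 1 ≤ t)
    (L M : ℕ) (hL : L = ⌈t * r⌉₊) (hM : M = ⌈t * r⌉₊ - ⌈r⌉₊)
    (u : ℕ → ℝ)
    (h0 : u 0 = t - 1)
    (hnonneg : ∀ j, j < L → 0 ≤ u j)
    (hmono : ∀ i j, i ≤ j → j < L → u j ≤ u i)
    (harith : ∀ j, 1 ≤ j → j + 1 ≤ M → u (j + 1) = u j - 1 / r)
    (ha1 : 1 ≤ M → t - 1 - u 1 ≤ 1 / r) :
    (∑ j ∈ Finset.range L, u j) / L ≥ (t - 2 + 1 / t) / 2 := by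
  have ht0 : (0:ℝ) < t := lt_of_lt_of_le one_pos ht
  set s : ℝ := t - 1 with hs
  have hs0 : 0 ≤ s := by simp [hs]; linarith
  have htr0 : 0 ≤ t * r := by positivity
  have hsr0 : 0 ≤ s * r := mul_nonneg hs0 hr.le
  have hrtr : r ≤ t * r := le_mul_of_one_le_left hr.le ht
  have hCle : ⌈r⌉₊ ≤ ⌈t*r⌉₊ := Nat.ceil_le_ceil hrtr
  have hC1 : 1 ≤ ⌈r⌉₊ := Nat.one_le_ceil_iff.mpr hr
  have hL1 : 1 ≤ L := hL ▸ le_trans hC1 hCle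
  have hMC : M + ⌈r⌉₊ = L := by omega
  -- real facts about the ceilings
  have hlr1 : t * r ≤ (L:ℝ) := by rw [hL]; exact Nat.le_ceil _
  have hlr2 : (L:ℝ) < t * r + 1 := by rw [hL]; exact Nat.ceil_lt_add_one htr0
  have hcr1 : r ≤ (⌈r⌉₊:ℝ) := Nat.le_ceil _
  have hcr2 : ((⌈r⌉₊:ℕ):ℝ) < r + 1 := Nat.ceil_lt_add_one hr.le
  set K : ℕ := min M ⌊s * r⌋₊ with hK
  have hKM : K ≤ M := min_le_left _ _
  have hKL : K + 1 ≤ L := by omega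
  -- key pointwise bound
  have key : ∀ j, j ≤ M → s - (j:ℝ) / r ≤ u j := by
    intro j
    induction j with
    | zero => intro _; simp [h0, hs]
    | succ n ih =>
      intro hn
      rcases Nat.eq_zero_or_pos n with h | h
      · subst h
        have h1 := ha1 hn
        push_cast
        simp only [hs]
        linarith
      · have heq := harith n h hn
        have hihn := ih (by omega)
        rw [heq]
        push_cast
        have hd : ((n:ℝ) + 1) / r = (n:ℝ)/r + 1/r := add_div _ _ _
        linarith
  -- Gauss sum
  have gauss : ∀ n : ℕ, ∑ i ∈ Finset.range n, (i:ℝ) = n * (n - 1) / 2 := by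
    intro n
    induction n with
    | zero => simp
    | succ m ih =>
      rw [Finset.sum_range_succ, ih]
      push_cast
      ring
  have hsum1 : ∑ j ∈ Finset.range (K+1), (s - (j:ℝ)/r) ≤ ∑ j ∈ Finset.range (K+1), u j := by
    apply Finset.sum_le_sum
    intro j hj
    exact key j (by have := Finset.mem_range.mp hj; omega)
  have hsum2 : ∑ j ∈ Finset.range (K+1), u j ≤ ∑ j ∈ Finset.range L, u j := by
    apply Finset.sum_le_sum_of_subset_of_nonneg (Finset.range_subset_range.mpr hKL)
    intro j hj _
    exact hnonneg j (Finset.mem_range.mp hj)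
  have hsum3 : ∑ j ∈ Finset.range (K+1), (s - (j:ℝ)/r)
      = ((K:ℝ)+1)*s - ((K:ℝ)*((K:ℝ)+1)/2)/r := by
    rw [Finset.sum_sub_distrib, Finset.sum_const, Finset.card_range]
    rw [← Finset.sum_div, gauss]
    push_cast
    ring
  -- bounds on K
  have hK1 : (K:ℝ) ≤ s * r := by
    have : (K:ℝ) ≤ (⌊s*r⌋₊:ℝ) := by exact_mod_cast min_le_right M ⌊s*r⌋₊
    exact le_trans this (Nat.floor_le hsr0)
  have hK2 : s * r - 1 < (K:ℝ) := by
    rcases le_or_gt M ⌊s * r⌋₊ with h | h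
    · have hKeq : K = M := min_eq_left h
      have hMcast : (M:ℝ) = (L:ℝ) - (⌈r⌉₊:ℝ) := by
        have : (M:ℝ) + (⌈r⌉₊:ℝ) = (L:ℝ) := by exact_mod_cast hMC
        linarith
      rw [hKeq, hMcast]
      simp only [hs]
      nlinarith
    · have hKeq : K = ⌊s * r⌋₊ := min_eq_right h.le
      rw [hKeq]
      have := Nat.lt_floor_add_one (s * r)
      linarith
  -- the main polynomial inequality
  have main : (L:ℝ) * (s^2/(2*t)) ≤ ((K:ℝ)+1)*s - ((K:ℝ)*((K:ℝ)+1)/2)/r := by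
    have expand : (((K:ℝ)+1)*s - ((K:ℝ)*((K:ℝ)+1)/2)/r) - (L:ℝ)*(s^2/(2*t))
        = (2*t*r*((K:ℝ)+1)*s - t*(K:ℝ)*((K:ℝ)+1) - (L:ℝ)*s^2*r) / (2*t*r) := by
      field_simp
    have poly : 0 ≤ 2*t*r*((K:ℝ)+1)*s - t*(K:ℝ)*((K:ℝ)+1) - (L:ℝ)*s^2*r := by
      nlinarith [mul_nonneg (mul_nonneg ht0.le (by linarith : (0:ℝ) ≤ s*r - (K:ℝ)))
          (by linarith : (0:ℝ) ≤ (K:ℝ) - s*r + 1),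
        mul_nonneg (mul_nonneg (mul_nonneg hr.le hs0) hs0)
          (by linarith : (0:ℝ) ≤ t*r + 1 - (L:ℝ)),
        mul_nonneg hr.le hs0, mul_pos hr ht0]
    have h2 : 0 ≤ (((K:ℝ)+1)*s - ((K:ℝ)*((K:ℝ)+1)/2)/r) - (L:ℝ)*(s^2/(2*t)) := by
      rw [expand]
      exact div_nonneg poly (by positivity)
    linarith
  have hL0 : (0:ℝ) < (L:ℝ) := by exact_mod_cast hL1
  rw [ge_iff_le, le_div_iff₀ hL0]
  have heqn : (t - 2 + 1/t)/2 * (L:ℝ) = (L:ℝ) * (s^2/(2*t)) := by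
    simp only [hs]
    field_simp
    ring
  rw [heqn]
  calc (L:ℝ) * (s^2/(2*t)) ≤ ((K:ℝ)+1)*s - ((K:ℝ)*((K:ℝ)+1)/2)/r := main
    _ = ∑ j ∈ Finset.range (K+1), (s - (j:ℝ)/r) := hsum3.symm
    _ ≤ ∑ j ∈ Finset.range (K+1), u j := hsum1
    _ ≤ ∑ j ∈ Finset.range L, u j := hsum2
end

section
/- Let r > 0 and t ≥ 1 be real numbers, and let a_0 = t−1, a_1, …, a_M be a nonincreasing nonnegative sequence with M = ⌈tr⌉−⌈r⌉, where a_1,…,a_M is arithmetic with common difference −1/r and t−1−a_1 ≤ 1/r. Then the average (1/(M+1))·Σ_{j=0}^M a_j is at least (t−1)/2. -/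
theorem average_head_claim (r t : ℝ) (hr : 0 < r) (ht : 1 ≤ t)
    (M : ℕ) (hM : M = ⌈t * r⌉₊ - ⌈r⌉₊)
    (a : ℕ → ℝ)
    (h0 : a 0 = t - 1)
    (hnonneg : ∀ j, j ≤ M → 0 ≤ a j)
    (hmono : ∀ i j, i ≤ j → j ≤ M → a j ≤ a i)
    (harith : ∀ j, 1 ≤ j → j + 1 ≤ M → a (j + 1) = a j - 1 / r)
    (ha1 : 1 ≤ M → t - 1 - a 1 ≤ 1 / r) :
    (∑ j ∈ Finset.range (M + 1), a j) / (M + 1) ≥ (t - 1) / 2 := by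
  have hform : ∀ k : ℕ, 1 ≤ k → k ≤ M → a k = a 1 - ((k : ℝ) - 1) / r := by
    intro k
    induction k with
    | zero => omega
    | succ n ih =>
      intro _ hle
      rcases Nat.eq_zero_or_pos n with h | h
      · subst h; simp
      · have h1 := harith n h (by omega)
        have h2 := ih h (by omega)
        rw [h1, h2]
        push_cast
        ring
  have haM : 0 ≤ a M := hnonneg M le_rfl
  have key : ∀ j ≤ M, t - 1 ≤ a j + a (M - j) := by
    intro j hj
    rcases Nat.eq_zero_or_pos j with h | h
    · subst h; simp [h0]; linarith
    rcases Nat.eq_or_lt_of_le hj with h' | h'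
    · subst h'; simp [h0]; linarith
    -- now 1 ≤ j ≤ M-1, so M ≥ 2
    have hM1 : 1 ≤ M := by omega
    have ha1' : t - 1 - 1 / r ≤ a 1 := by have := ha1 hM1; linarith
    have hfj := hform j h (by omega)
    have hfMj := hform (M - j) (by omega) (by omega)
    have hfM := hform M hM1 le_rfl
    have haMpos : 0 ≤ a 1 - ((M : ℝ) - 1) / r := by rw [← hfM]; exact haM
    have hcast : ((M - j : ℕ) : ℝ) = (M : ℝ) - (j : ℝ) := by
      push_cast [Nat.cast_sub hj]; ring
    rw [hfj, hfMj, hcast]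
    have h1r : 0 < 1 / r := by positivity
    have : ((M : ℝ) - 1) / r ≤ a 1 := by linarith
    have hsplit : ((M : ℝ) - 1) / r = ((M : ℝ) - 2) / r + 1 / r := by
      field_simp; ring
    have h2 : ((M : ℝ) - 2) / r + 1 / r ≤ a 1 := by linarith
    -- goal: t - 1 ≤ (a 1 - (j-1)/r) + (a 1 - ((M-j)-1)/r) = 2 a 1 - (M-2)/r
    have hsum : ((j : ℝ) - 1) / r + ((M : ℝ) - (j : ℝ) - 1) / r = ((M : ℝ) - 2) / r := by
      field_simp; ring
    linarith
  have hrefl : ∑ j ∈ Finset.range (M + 1), a (M - j)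
      = ∑ j ∈ Finset.range (M + 1), a j := by
    have := Finset.sum_range_reflect a (M + 1)
    simpa using this
  have hsum2 : ((M : ℝ) + 1) * (t - 1) ≤ 2 * ∑ j ∈ Finset.range (M + 1), a j := by
    calc ((M : ℝ) + 1) * (t - 1)
        = ∑ _j ∈ Finset.range (M + 1), (t - 1) := by
          rw [Finset.sum_const, Finset.card_range]; push_cast; ring
      _ ≤ ∑ j ∈ Finset.range (M + 1), (a j + a (M - j)) := by
          apply Finset.sum_le_sum
          intro i hi
          exact key i (by simpa [Nat.lt_succ_iff] using hi)
      _ = 2 * ∑ j ∈ Finset.range (M + 1), a j := by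
          rw [Finset.sum_add_distrib, hrefl]; ring
  rw [ge_iff_le, div_le_div_iff₀ (by norm_num) (by positivity)]
  linarith
end

section
/- For all real numbers t ≥ 1: ⌊t⌋·(1 − (⌊t⌋+1)/(2t)) ≥ (t−2+1/t)/2, i.e., the proportionality-degree bound implied by EJR-M is at least that implied by EJR-1. -/
theorem EJRM_bound_ge_EJR1_bound (t : ℝ) (ht : 1 ≤ t) :
    (⌊t⌋ : ℝ) * (1 - ((⌊t⌋ : ℝ) + 1) / (2 * t)) ≥ (t - 2 + 1 / t) / 2 := by
  have ht0 : (0:ℝ) < t := lt_of_lt_of_le zero_lt_one ht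
  have h1 : (⌊t⌋:ℝ) ≤ t := Int.floor_le t
  have h2 : t < (⌊t⌋:ℝ) + 1 := Int.lt_floor_add_one t
  have h3 : (1:ℝ) ≤ (⌊t⌋:ℝ) := by
    exact_mod_cast Int.le_floor.mpr (by exact_mod_cast ht)
  rw [ge_iff_le, div_le_iff₀ (by norm_num : (0:ℝ) < 2)]
  have ht' : t ≠ 0 := ne_of_gt ht0
  have key : 2*(⌊t⌋:ℝ)*t - (⌊t⌋:ℝ)*((⌊t⌋:ℝ)+1) ≥ (t-1)^2 := by nlinarith
  have expand : (⌊t⌋:ℝ) * (1 - ((⌊t⌋:ℝ)+1)/(2*t)) * 2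
      = (2*(⌊t⌋:ℝ)*t - (⌊t⌋:ℝ)*((⌊t⌋:ℝ)+1))/t := by
    field_simp
  rw [expand]
  rw [le_div_iff₀ ht0]
  have : (t - 2 + 1 / t) * t = (t-1)^2 := by field_simp; ring
  linarith
end

section
/- Let t ≥ 2 be a real number, k = ⌊t⌋, and r a positive integer with ⌈tr⌉ ≤ (k+1)r − 1. Define N_j to have size r for j = 1,…,k−1, N_0 size r−1, and N_k size ⌈tr⌉ − kr + 1, so that the total is ⌈tr⌉. Then (1/⌈tr⌉)·Σ_{j=0}^{k} |N_j|·j ≤ k·(1 − (k+1)/(2t)) + k(k²+k+2)·α/(n·t) where α = (k²+k+2)/2 and n = αr. -/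
theorem greedyEJRM_average_satisfaction_upper (t : ℝ) (ht : 2 ≤ t)
    (K : ℕ) (hK : K = ⌊t⌋₊) (r : ℕ) (hr : 0 < r)
    (L : ℕ) (hL : L = ⌈t * r⌉₊) (hLb : (L : ℝ) ≤ (K + 1) * r - 1)
    (α : ℝ) (hα : α = ((K : ℝ) ^ 2 + K + 2) / 2)
    (n : ℝ) (hn : n = α * r) :
    ((∑ j ∈ Finset.range (K - 1), (r : ℝ) * (j + 1)) + ((L : ℝ) - K * r + 1) * K) / L ≤
      (K : ℝ) * (1 - ((K : ℝ) + 1) / (2 * t)) + K * ((K : ℝ) ^ 2 + K + 2) * α / (n * t) := by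
  have hK2 : 2 ≤ K := by rw [hK]; exact Nat.le_floor (by exact_mod_cast ht)
  have hkt : (K : ℝ) ≤ t := by rw [hK]; exact Nat.floor_le (by linarith)
  have hr1 : (1 : ℝ) ≤ (r : ℝ) := by exact_mod_cast hr
  have ht0 : (0 : ℝ) < t := by linarith
  have htr0 : (0 : ℝ) ≤ t * r := by nlinarith
  have hLl : t * r ≤ (L : ℝ) := by rw [hL]; exact Nat.le_ceil _
  have hLu : (L : ℝ) ≤ t * r + 1 := by rw [hL]; exact (Nat.ceil_lt_add_one htr0).le
  have hL0 : (0 : ℝ) < (L : ℝ) := by nlinarith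
  have hk2 : (2 : ℝ) ≤ (K : ℝ) := by exact_mod_cast hK2
  have gauss : ∀ m : ℕ, (∑ j ∈ Finset.range m, ((j : ℝ) + 1)) = m * (m + 1) / 2 := by
    intro m
    induction m with
    | zero => simp
    | succ p ih => rw [Finset.sum_range_succ, ih]; push_cast; ring
  have hsum : (∑ j ∈ Finset.range (K - 1), (r : ℝ) * (j + 1))
      = (r : ℝ) * (((K : ℝ) - 1) * K / 2) := by
    rw [← Finset.mul_sum, gauss (K - 1)]
    have hc : ((K - 1 : ℕ) : ℝ) = (K : ℝ) - 1 := by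
      push_cast [Nat.cast_sub (by omega : 1 ≤ K)]; ring
    rw [hc]
    ring
  rw [hsum]
  have hα0 : 0 < α := by rw [hα]; positivity
  have hr0 : (0 : ℝ) < (r : ℝ) := by linarith
  have hrhs : (K : ℝ) * (1 - ((K : ℝ) + 1) / (2 * t)) + K * ((K : ℝ) ^ 2 + K + 2) * α / (n * t)
      = (2 * t * r * K - (r : ℝ) * K * (K + 1) + 2 * K * ((K : ℝ) ^ 2 + K + 2)) / (2 * t * r) := by
    rw [hn]
    field_simp
  rw [hrhs, div_le_div_iff₀ hL0 (by positivity : (0 : ℝ) < 2 * t * r)]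
  have h1 : (r : ℝ) * ((K : ℝ) + 1) * ((L : ℝ) - t * r) ≤ (r : ℝ) * ((K : ℝ) + 1) * 1 := by
    apply mul_le_mul_of_nonneg_left (by linarith) (by nlinarith)
  have hbr : 0 ≤ 2 * ((K : ℝ) ^ 2 + K + 2) * L - 2 * t * r - (r : ℝ) * ((K : ℝ) + 1) * ((L : ℝ) - t * r) := by
    have h2 : 2 * t * (r : ℝ) * ((K : ℝ) ^ 2 + K + 2) ≤ 2 * (L : ℝ) * ((K : ℝ) ^ 2 + K + 2) := by
      nlinarith [sq_nonneg ((K : ℝ))]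
    nlinarith [sq_nonneg ((K : ℝ))]
  have key : (2 * t * r * K - (r : ℝ) * K * (K + 1) + 2 * K * ((K : ℝ) ^ 2 + K + 2)) * L
      - (((r : ℝ) * (((K : ℝ) - 1) * K / 2) + ((L : ℝ) - K * r + 1) * K) * (2 * t * r))
      = (K : ℝ) * (2 * ((K : ℝ) ^ 2 + K + 2) * L - 2 * t * r
          - (r : ℝ) * ((K : ℝ) + 1) * ((L : ℝ) - t * r)) := by ring
  linarith [mul_nonneg (by linarith : (0 : ℝ) ≤ (K : ℝ)) hbr, key]
end
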